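/- For fixed k ≥ 1 and m ≥ 1, the quantity F_k(n,m) is weakly decreasing in n for n ≥ k: F_k(n,m) ≥ F_k(n+1,m). -/

import Mathlib

/-- The strict order induced on a subset `X` of `[n]` by a permutation `P`
(thought of as assigning each element its position): `a` before `b` iff `P a < P b`. -/
def ordOn {n : ℕ} (P : Equiv.Perm (Fin n)) (X : Finset (Fin n)) :
    ↥X → ↥X → Prop :=
  fun a b => P a.val < P b.val

/-- The set of orders (patterns) realized on `X` by a family `S` of permutations. -/
def realized {n : ℕ} (S : Set (Equiv.Perm (Fin n))) (X : Finset (Fin n)) :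
    Set (↥X → ↥X → Prop) :=
  (fun P => ordOn P X) '' S

/-- A family `S` totally shatters a subset `X` if all `|X|!` relative orders of the
elements of `X` occur among the permutations of `S`. -/
def TotallyShatters {n : ℕ} (S : Set (Equiv.Perm (Fin n))) (X : Finset (Fin n)) : Prop :=
  (realized S X).ncard = Nat.factorial X.card

/-- `F k n m`: the maximum, over collections of `m` permutations of `[n]`, of the
fraction of `k`-subsets of `[n]` that are totally shattered. -/
noncomputable def F (k n m : ℕ) : ℝ :=
  sSup {α : ℝ | ∃ S : Fin m → Equiv.Perm (Fin n),
    α = ({X : Finset (Fin n) | X.card = k ∧ TotallyShatters (Set.range S) X}.ncard : ℝ) /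
      (n.choose k)}

section Del

variable {n : ℕ}

/-- rank of `a` under an injective map `g`. -/
def rk {N : ℕ} (g : Fin n → Fin N) (a : Fin n) : ℕ :=
  (Finset.univ.filter (fun b => g b < g a)).card

lemma rk_lt {N : ℕ} (g : Fin n → Fin N) (a : Fin n) : rk g a < n := by
  have hsub : (Finset.univ.filter (fun b => g b < g a)) ⊆ Finset.univ.erase a := by
    intro b hb
    simp only [Finset.mem_filter, Finset.mem_univ, true_and] at hb
    refine Finset.mem_erase.mpr ⟨?_, Finset.mem_univ b⟩
    rintro rfl; exact lt_irrefl _ hb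
  have := Finset.card_le_card hsub
  have h2 : (Finset.univ.erase a).card = n - 1 := by
    rw [Finset.card_erase_of_mem (Finset.mem_univ a)]; simp
  rw [h2] at this
  exact lt_of_le_of_lt this (Nat.sub_lt a.pos one_pos)

lemma rk_strictMono {N : ℕ} (g : Fin n → Fin N) {a b : Fin n} (h : g a < g b) :
    rk g a < rk g b := by
  apply Finset.card_lt_card
  constructor
  · intro c hc
    simp only [Finset.mem_filter, Finset.mem_univ, true_and] at hc ⊢
    exact lt_trans hc h
  · intro hsub
    have : a ∈ Finset.univ.filter (fun c => g c < g b) := by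
      simp only [Finset.mem_filter, Finset.mem_univ, true_and]; exact h
    have := hsub this
    simp only [Finset.mem_filter, Finset.mem_univ, true_and] at this
    exact lt_irrefl _ this

lemma rk_lt_rk_iff {N : ℕ} {g : Fin n → Fin N} (hg : Function.Injective g) {a b : Fin n} :
    rk g a < rk g b ↔ g a < g b := by
  constructor
  · intro h
    rcases lt_trichotomy (g a) (g b) with h1 | h1 | h1
    · exact h1
    · exact absurd h (by rw [hg h1]; exact lt_irrefl _)
    · exact absurd (lt_trans h (rk_strictMono g h1)) (lt_irrefl _)
  · exact rk_strictMono g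

lemma del_inj (i : Fin (n + 1)) (P : Equiv.Perm (Fin (n + 1))) :
    Function.Injective (fun a : Fin n => (⟨rk (fun c => P (i.succAbove c)) a,
      rk_lt _ a⟩ : Fin n)) := by
  have hg : Function.Injective (fun c : Fin n => P (i.succAbove c)) :=
    P.injective.comp Fin.succAbove_right_injective
  intro a b hab
  simp only [Fin.mk.injEq] at hab
  by_contra hne
  rcases lt_trichotomy ((fun c => P (i.succAbove c)) a) ((fun c => P (i.succAbove c)) b)
      with h | h | h
  · exact absurd hab (Nat.ne_of_lt (rk_strictMono _ h))
  · exact hne (hg h)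
  · exact absurd hab.symm (Nat.ne_of_lt (rk_strictMono _ h))

/-- deleting position `i` from a permutation, keeping the relative order of the rest. -/
noncomputable def del (i : Fin (n + 1)) (P : Equiv.Perm (Fin (n + 1))) :
    Equiv.Perm (Fin n) :=
  Equiv.ofBijective _ (Finite.injective_iff_bijective.mp (del_inj i P))

lemma del_lt_iff (i : Fin (n + 1)) (P : Equiv.Perm (Fin (n + 1))) (a b : Fin n) :
    del i P a < del i P b ↔ P (i.succAbove a) < P (i.succAbove b) := by
  have hg : Function.Injective (fun c : Fin n => P (i.succAbove c)) :=
    P.injective.comp Fin.succAbove_right_injective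
  show (⟨rk _ a, _⟩ : Fin n) < ⟨rk _ b, _⟩ ↔ _
  rw [Fin.mk_lt_mk]
  exact rk_lt_rk_iff hg

end Del

section Shatter

variable {n : ℕ}

lemma image_preimage_succAbove (i : Fin (n + 1)) (X : Finset (Fin (n + 1))) (hi : i ∉ X) :
    (X.preimage i.succAbove Fin.succAbove_right_injective.injOn).image i.succAbove = X := by
  ext x
  simp only [Finset.mem_image, Finset.mem_preimage]
  constructor
  · rintro ⟨a, ha, rfl⟩; exact ha
  · intro hx
    have hxi : x ≠ i := by rintro rfl; exact hi hx
    obtain ⟨a, ha⟩ := Fin.exists_succAbove_eq hxi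
    exact ⟨a, by rw [ha]; exact hx, ha⟩

lemma card_preimage_succAbove (i : Fin (n + 1)) (X : Finset (Fin (n + 1))) (hi : i ∉ X) :
    (X.preimage i.succAbove Fin.succAbove_right_injective.injOn).card = X.card := by
  conv_rhs => rw [← image_preimage_succAbove i X hi]
  rw [Finset.card_image_of_injective _ Fin.succAbove_right_injective]

lemma realized_del (T : Set (Equiv.Perm (Fin (n + 1)))) (i : Fin (n + 1))
    (X : Finset (Fin (n + 1))) (hi : i ∉ X) :
    (realized ((del i) '' T)
      (X.preimage i.succAbove Fin.succAbove_right_injective.injOn)).ncard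
      = (realized T X).ncard := by
  set Y := X.preimage i.succAbove Fin.succAbove_right_injective.injOn with hY
  -- the equivalence between Y and X
  have htoY : ∀ a : Fin n, a ∈ Y ↔ i.succAbove a ∈ X := by
    intro a; simp [hY, Finset.mem_preimage]
  have hbij : Function.Bijective (fun a : ↥Y => (⟨i.succAbove a.1,
      (htoY a.1).mp a.2⟩ : ↥X)) := by
    constructor
    · intro a b hab
      simp only [Subtype.mk.injEq] at hab
      exact Subtype.ext (Fin.succAbove_right_injective hab)
    · rintro ⟨x, hx⟩
      have hxi : x ≠ i := by rintro rfl; exact hi hx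
      obtain ⟨a, ha⟩ := Fin.exists_succAbove_eq hxi
      exact ⟨⟨a, (htoY a).mpr (by rw [ha]; exact hx)⟩, Subtype.ext ha⟩
  set ε : ↥Y ≃ ↥X := Equiv.ofBijective _ hbij with hε
  have hεval : ∀ a : ↥Y, ((ε a : ↥X) : Fin (n + 1)) = i.succAbove a.1 := fun a => rfl
  set φ : (↥Y → ↥Y → Prop) → (↥X → ↥X → Prop) :=
    fun R x y => R (ε.symm x) (ε.symm y) with hφ
  have hφinj : Function.Injective φ := by
    intro R R' h
    funext a b
    have := congrFun (congrFun h (ε a)) (ε b)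
    simpa [hφ, Equiv.symm_apply_apply] using this
  have hkey : ∀ P : Equiv.Perm (Fin (n + 1)), φ (ordOn (del i P) Y) = ordOn P X := by
    intro P
    funext x y
    show (del i P (ε.symm x).1 < del i P (ε.symm y).1) = (P x.1 < P y.1)
    rw [del_lt_iff]
    have hx : i.succAbove (ε.symm x).1 = x.1 := by
      have := hεval (ε.symm x); rw [Equiv.apply_symm_apply] at this; exact this.symm ▸ rfl
    have hy : i.succAbove (ε.symm y).1 = y.1 := by
      have := hεval (ε.symm y); rw [Equiv.apply_symm_apply] at this; exact this.symm ▸ rfl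
    rw [hx, hy]
  have himg : φ '' (realized ((del i) '' T) Y) = realized T X := by
    unfold realized
    rw [Set.image_image, Set.image_image]
    exact Set.image_congr (fun P _ => hkey P)
  rw [← himg, Set.ncard_image_of_injective _ hφinj]

lemma shatters_del (T : Set (Equiv.Perm (Fin (n + 1)))) (i : Fin (n + 1))
    (X : Finset (Fin (n + 1))) (hi : i ∉ X) (h : TotallyShatters T X) :
    TotallyShatters ((del i) '' T)
      (X.preimage i.succAbove Fin.succAbove_right_injective.injOn) := by
  unfold TotallyShatters at h ⊢
  rw [realized_del T i X hi, card_preimage_succAbove i X hi]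
  exact h

end Shatter

section Count

open Classical in
/-- number of totally shattered `k`-subsets. -/
noncomputable def cnt (k n : ℕ) (S : Set (Equiv.Perm (Fin n))) : ℕ :=
  (Finset.univ.filter
    (fun X : Finset (Fin n) => X.card = k ∧ TotallyShatters S X)).card

open Classical in
lemma cnt_eq_ncard (k n : ℕ) (S : Set (Equiv.Perm (Fin n))) :
    ({X : Finset (Fin n) | X.card = k ∧ TotallyShatters S X}.ncard : ℝ) = (cnt k n S : ℝ) := by
  congr 1
  rw [Set.ncard_eq_toFinset_card', Set.toFinset_setOf]
  rfl

open Classical in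
lemma count_avg (k n : ℕ) (T : Fin m → Equiv.Perm (Fin (n + 1))) (hkn : k ≤ n) :
    ∃ i : Fin (n + 1),
      (n + 1 - k) * cnt k (n + 1) (Set.range T)
        ≤ (n + 1) * cnt k n (Set.range (fun j => del i (T j))) := by
  set 𝒮 : Finset (Finset (Fin (n + 1))) := Finset.univ.filter
    (fun X => X.card = k ∧ TotallyShatters (Set.range T) X) with h𝒮
  -- Step A : local injection
  have stepA : ∀ i : Fin (n + 1),
      (𝒮.filter (fun X => i ∉ X)).card ≤ cnt k n (Set.range (fun j => del i (T j))) := by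
    intro i
    have hrange : Set.range (fun j => del i (T j)) = (del i) '' Set.range T := by
      rw [← Set.range_comp]; rfl
    apply Finset.card_le_card_of_injOn
      (fun X => X.preimage i.succAbove Fin.succAbove_right_injective.injOn)
    · intro X hX
      simp only [h𝒮, Finset.mem_coe, Finset.mem_filter, Finset.mem_univ, true_and] at hX
      obtain ⟨⟨hcard, hsh⟩, hi⟩ := hX
      simp only [cnt, Finset.mem_coe, Finset.mem_filter, Finset.mem_univ, true_and]
      refine ⟨by rw [card_preimage_succAbove i X hi, hcard], ?_⟩
      rw [hrange]
      exact shatters_del _ i X hi hsh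
    · intro X hX X' hX' h
      simp only [Finset.coe_filter, Set.mem_setOf_eq] at hX hX'
      have h1 := image_preimage_succAbove i X hX.2
      have h2 := image_preimage_succAbove i X' hX'.2
      rw [← h1, ← h2]
      exact congrArg _ h
  -- Step B : double counting
  have stepB : ∑ i : Fin (n + 1), (𝒮.filter (fun X => i ∉ X)).card
      = (n + 1 - k) * 𝒮.card := by
    have : ∀ X ∈ 𝒮, (Finset.univ.filter (fun i : Fin (n + 1) => i ∉ X)).card = n + 1 - k := by
      intro X hX
      simp only [h𝒮, Finset.mem_filter, Finset.mem_univ, true_and] at hX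
      have : Finset.univ.filter (fun i : Fin (n + 1) => i ∉ X) = Xᶜ := by
        ext x; simp [Finset.mem_compl]
      rw [this, Finset.card_compl, hX.1]; simp
    calc ∑ i : Fin (n + 1), (𝒮.filter (fun X => i ∉ X)).card
        = ∑ i : Fin (n + 1), ∑ X ∈ 𝒮, if i ∉ X then 1 else 0 := by
          simp [Finset.card_filter]
      _ = ∑ X ∈ 𝒮, ∑ i : Fin (n + 1), if i ∉ X then 1 else 0 := Finset.sum_comm
      _ = ∑ X ∈ 𝒮, (n + 1 - k) := by
          apply Finset.sum_congr rfl
          intro X hX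
          rw [← this X hX, Finset.card_filter]
      _ = (n + 1 - k) * 𝒮.card := by rw [Finset.sum_const, smul_eq_mul, mul_comm]
  -- pigeonhole
  by_contra hcon
  push_neg at hcon
  have hsum : ∑ i : Fin (n + 1), (n + 1) * cnt k n (Set.range (fun j => del i (T j)))
      < ∑ _i : Fin (n + 1), (n + 1 - k) * cnt k (n + 1) (Set.range T) := by
    apply Finset.sum_lt_sum_of_nonempty Finset.univ_nonempty
    intro i _
    exact hcon i
  have hN : cnt k (n + 1) (Set.range T) = 𝒮.card := rfl
  have h1 : (n + 1) * ((n + 1 - k) * 𝒮.card)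
      ≤ (n + 1) * ∑ i : Fin (n + 1), cnt k n (Set.range (fun j => del i (T j))) := by
    apply Nat.mul_le_mul_left
    rw [← stepB]
    exact Finset.sum_le_sum (fun i _ => stepA i)
  rw [Finset.sum_const, Finset.card_univ, Fintype.card_fin, smul_eq_mul, hN,
    ← Finset.mul_sum] at hsum
  omega

end Count

section Final

/-- the fraction of shattered `k`-sets achieved by a family `S`. -/
noncomputable def val (k n m : ℕ) (S : Fin m → Equiv.Perm (Fin n)) : ℝ :=
  ({X : Finset (Fin n) | X.card = k ∧ TotallyShatters (Set.range S) X}.ncard : ℝ) /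
    (n.choose k)

lemma F_eq_sSup_range (k n m : ℕ) : F k n m = sSup (Set.range (val k n m)) := by
  unfold F
  congr 1
  ext α
  exact ⟨fun ⟨S, h⟩ => ⟨S, h.symm⟩, fun ⟨S, h⟩ => ⟨S, h.symm⟩⟩

lemma val_le_F (k n m : ℕ) (S : Fin m → Equiv.Perm (Fin n)) : val k n m S ≤ F k n m := by
  rw [F_eq_sSup_range]
  exact le_csSup (Set.finite_range _).bddAbove ⟨S, rfl⟩

lemma F_mem (k n m : ℕ) : ∃ S : Fin m → Equiv.Perm (Fin n), F k n m = val k n m S := by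
  rw [F_eq_sSup_range]
  have h := (Set.range_nonempty (val k n m)).csSup_mem (Set.finite_range _)
  obtain ⟨S, hS⟩ := h
  exact ⟨S, hS.symm⟩

/-- for fixed `k ≥ 1` and `m ≥ 1`, `F_k(n,m)` is weakly decreasing
in `n` for `n ≥ k`. -/
theorem stmt_11 (k m n : ℕ) (hk : 1 ≤ k) (hm : 1 ≤ m) (hn : k ≤ n) :
    F k (n + 1) m ≤ F k n m := by
  obtain ⟨T, hT⟩ := F_mem k (n + 1) m
  obtain ⟨i, hi⟩ := count_avg k n T hn
  set S : Fin m → Equiv.Perm (Fin n) := fun j => del i (T j) with hS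
  refine le_trans ?_ (val_le_F k n m S)
  rw [hT]
  unfold val
  rw [cnt_eq_ncard, cnt_eq_ncard]
  have c2 : 0 < ((n.choose k : ℕ) : ℝ) := by
    exact_mod_cast Nat.choose_pos hn
  have c1 : 0 < (((n + 1).choose k : ℕ) : ℝ) := by
    exact_mod_cast Nat.choose_pos (le_trans hn (Nat.le_succ n))
  rw [div_le_div_iff₀ c1 c2]
  have key := Nat.choose_mul_succ_eq n k
  set N := cnt k (n + 1) (Set.range T) with hN
  set Ni := cnt k n (Set.range S) with hNi
  have h3 : ((n + 1 - k) * N) * ((n + 1).choose k) ≤ ((n + 1) * Ni) * ((n + 1).choose k) :=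
    Nat.mul_le_mul_right _ hi
  have hnat : N * n.choose k * (n + 1) ≤ Ni * (n + 1).choose k * (n + 1) := by
    calc N * n.choose k * (n + 1) = N * (n.choose k * (n + 1)) := by ring
      _ = N * ((n + 1).choose k * (n + 1 - k)) := by rw [key]
      _ = ((n + 1 - k) * N) * ((n + 1).choose k) := by ring
      _ ≤ ((n + 1) * Ni) * ((n + 1).choose k) := h3
      _ = Ni * (n + 1).choose k * (n + 1) := by ring
  have hfin : N * n.choose k ≤ Ni * (n + 1).choose k :=
    Nat.le_of_mul_le_mul_right hnat (Nat.succ_pos n)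
  exact_mod_cast hfin


end Final
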